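/- Let a = (a1, a2) be a unit vector in R^2 with a1 > a2 > 0 and let t satisfy a1 - a2 ≤ t ≤ a1 + a2. Then the 2-dimensional Lebesgue measure of the slab {x ∈ [-1/2,1/2]^2 : |a1*x1 + a2*x2| ≤ t/2} equals 1 - (a1 + a2 - t)^2/(4*a1*a2). -/

import Mathlib

open MeasureTheory Set

lemma integral_affine (p q a b : ℝ) :
    ∫ x in a..b, (p + q * x) = p * (b - a) + q * ((b ^ 2 - a ^ 2) / 2) := by
  rw [intervalIntegral.integral_add intervalIntegrable_const
    (intervalIntegral.intervalIntegrable_id.const_mul q),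
    intervalIntegral.integral_const, intervalIntegral.integral_const_mul,
    integral_id, smul_eq_mul, mul_comm]

set_option maxHeartbeats 1000000 in
theorem slab_square_chamber2_volume
    (a1 a2 t : ℝ) (hunit : a1 ^ 2 + a2 ^ 2 = 1) (h12 : a1 > a2) (h2 : a2 > 0)
    (ht0 : a1 - a2 ≤ t) (ht1 : t ≤ a1 + a2) :
    volume {x : EuclideanSpace ℝ (Fin 2) |
        (∀ i, |x i| ≤ 1 / 2) ∧ |a1 * x 0 + a2 * x 1| ≤ t / 2}
      = ENNReal.ofReal (1 - (a1 + a2 - t) ^ 2 / (4 * a1 * a2)) := by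
  have h1 : (0:ℝ) < a1 := lt_trans h2 h12
  set u : ℝ → ℝ := fun x => (t / 2 - a1 * x) / a2 with hu
  set l : ℝ → ℝ := fun x => (-(t / 2) - a1 * x) / a2 with hl
  set S' : Set (ℝ × ℝ) :=
    {p : ℝ × ℝ | |p.1| ≤ 1 / 2 ∧ |p.2| ≤ 1 / 2 ∧ |a1 * p.1 + a2 * p.2| ≤ t / 2} with hS'
  have hS'meas : MeasurableSet S' := by
    rw [hS']
    apply MeasurableSet.inter
    · exact measurableSet_le ((measurable_fst).abs) measurable_const
    apply MeasurableSet.inter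
    · exact measurableSet_le ((measurable_snd).abs) measurable_const
    · exact measurableSet_le (((measurable_fst.const_mul a1).add
        (measurable_snd.const_mul a2)).abs) measurable_const
  -- step 1: reduce to ℝ × ℝ
  have step1 : volume {x : EuclideanSpace ℝ (Fin 2) |
        (∀ i, |x i| ≤ 1 / 2) ∧ |a1 * x 0 + a2 * x 1| ≤ t / 2} = volume S' := by
    have e1 := EuclideanSpace.volume_preserving_symm_measurableEquiv_toLp (Fin 2)
    have e2 := volume_preserving_finTwoArrow ℝ
    rw [← e2.measure_preimage hS'meas.nullMeasurableSet]
    have hpre : ((MeasurableEquiv.finTwoArrow : (Fin 2 → ℝ) ≃ᵐ ℝ × ℝ) ⁻¹' S' : Set (Fin 2 → ℝ)) =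
        {x : Fin 2 → ℝ | (∀ i, |x i| ≤ 1 / 2) ∧ |a1 * x 0 + a2 * x 1| ≤ t / 2} := by
      ext x
      simp [MeasurableEquiv.finTwoArrow, S', Fin.forall_fin_two, and_assoc]
    rw [hpre]
    have hmeas2 : MeasurableSet
        {x : Fin 2 → ℝ | (∀ i, |x i| ≤ 1 / 2) ∧ |a1 * x 0 + a2 * x 1| ≤ t / 2} := by
      have : {x : Fin 2 → ℝ | (∀ i, |x i| ≤ 1 / 2) ∧ |a1 * x 0 + a2 * x 1| ≤ t / 2}
          = (⋂ i, {x : Fin 2 → ℝ | |x i| ≤ 1 / 2}) ∩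
            {x : Fin 2 → ℝ | |a1 * x 0 + a2 * x 1| ≤ t / 2} := by
        ext x; simp [Set.mem_iInter]
      rw [this]
      exact (MeasurableSet.iInter fun i =>
          measurableSet_le (measurable_pi_apply i).abs measurable_const).inter
        (measurableSet_le (by fun_prop) measurable_const)
    rw [← e1.measure_preimage hmeas2.nullMeasurableSet]
    rfl
  rw [step1]
  -- step 2: slice and indicator
  have step2 : volume S' = ∫⁻ x, (Icc (-(1/2):ℝ) (1/2)).indicator
      (fun x => ENNReal.ofReal (min (1/2) (u x) - max (-(1/2)) (l x))) x := by
    rw [Measure.volume_eq_prod, Measure.prod_apply hS'meas]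
    congr 1
    ext x
    by_cases hx : x ∈ Icc (-(1/2):ℝ) (1/2)
    · have hx' : |x| ≤ 1/2 := abs_le.2 ⟨hx.1, hx.2⟩
      have hset : Prod.mk x ⁻¹' S' = Icc (-(1/2):ℝ) (1/2) ∩ Icc (l x) (u x) := by
        ext y
        simp only [hS', mem_preimage, mem_setOf_eq, mem_inter_iff, mem_Icc, abs_le]
        constructor
        · rintro ⟨-, ⟨hy1, hy2⟩, hz1, hz2⟩
          refine ⟨⟨hy1, hy2⟩, ?_, ?_⟩
          · rw [hl]; simp only; rw [div_le_iff₀ h2]; nlinarith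
          · rw [hu]; simp only; rw [le_div_iff₀ h2]; nlinarith
        · rintro ⟨⟨hy1, hy2⟩, hz1, hz2⟩
          rw [hl] at hz1; rw [hu] at hz2; simp only at hz1 hz2
          rw [div_le_iff₀ h2] at hz1; rw [le_div_iff₀ h2] at hz2
          exact ⟨⟨hx.1, hx.2⟩, ⟨hy1, hy2⟩, by nlinarith, by nlinarith⟩
      rw [hset, Icc_inter_Icc, Real.volume_Icc, indicator_of_mem hx]
    · rw [indicator_of_notMem hx]
      have hxa : ¬ |x| ≤ 1/2 := fun h => hx ⟨(abs_le.1 h).1, (abs_le.1 h).2⟩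
      have : Prod.mk x ⁻¹' S' = ∅ := by
        ext y; simp only [hS', mem_preimage, mem_setOf_eq, mem_empty_iff_false, iff_false]
        exact fun h => hxa h.1
      simp [this]
  rw [step2]
  set g : ℝ → ℝ := fun x => min (1/2) (u x) - max (-(1/2)) (l x) with hg
  have hu_cont : Continuous u := by
    rw [hu]; exact (continuous_const.sub ((continuous_mul_left a1))).div_const a2
  have hl_cont : Continuous l := by
    rw [hl]; exact (continuous_const.sub ((continuous_mul_left a1))).div_const a2
  have hg_cont : Continuous g := by
    rw [hg]
    exact (continuous_const.min hu_cont).sub (continuous_const.max hl_cont)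
  have hge : ∀ x ∈ Icc (-(1/2):ℝ) (1/2), 0 ≤ g x := by
    intro x hx
    refine sub_nonneg.2 (max_le (le_min (by norm_num) ?_) (le_min ?_ ?_))
    · rw [hu]; simp only; rw [le_div_iff₀ h2]; nlinarith [hx.1, hx.2]
    · rw [hl]; simp only; rw [div_le_iff₀ h2]; nlinarith [hx.1, hx.2]
    · rw [hl, hu]; simp only
      have h0t : (0:ℝ) ≤ t := le_trans (by linarith) ht0
      gcongr
      linarith
  have step3 : (∫⁻ x, (Icc (-(1/2):ℝ) (1/2)).indicator
      (fun x => ENNReal.ofReal (min (1/2) (u x) - max (-(1/2)) (l x))) x)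
      = ENNReal.ofReal (∫ x in (-(1/2):ℝ)..(1/2), g x) := by
    rw [lintegral_indicator measurableSet_Icc]
    rw [← MeasureTheory.ofReal_integral_eq_lintegral_ofReal
      (hg_cont.integrableOn_Icc) ((ae_restrict_iff' measurableSet_Icc).2 (ae_of_all _ hge))]
    rw [MeasureTheory.integral_Icc_eq_integral_Ioc,
      ← intervalIntegral.integral_of_le (by norm_num : (-(1/2):ℝ) ≤ 1/2)]
  rw [step3]
  congr 1
  set c : ℝ := (t - a2) / (2 * a1) with hcdef
  set d : ℝ := (a2 - t) / (2 * a1) with hddef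
  have h2a1 : (0:ℝ) < 2 * a1 := by linarith
  have hc1 : -(1/2:ℝ) ≤ c := by rw [hcdef, le_div_iff₀ h2a1]; nlinarith
  have hc2 : c ≤ 1/2 := by rw [hcdef, div_le_iff₀ h2a1]; nlinarith
  have hd1 : -(1/2:ℝ) ≤ d := by rw [hddef, le_div_iff₀ h2a1]; nlinarith
  have hd2 : d ≤ 1/2 := by rw [hddef, div_le_iff₀ h2a1]; nlinarith
  have hac : a1 * c = (t - a2) / 2 := by rw [hcdef]; field_simp
  have had : a1 * d = (a2 - t) / 2 := by rw [hddef]; field_simp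
  have intmin : ∀ p q : ℝ, IntervalIntegrable (fun x => min (1/2) (u x)) volume p q :=
    fun p q => (continuous_const.min hu_cont).intervalIntegrable p q
  have intmax : ∀ p q : ℝ, IntervalIntegrable (fun x => max (-(1/2)) (l x)) volume p q :=
    fun p q => (continuous_const.max hl_cont).intervalIntegrable p q
  have hsplit : ∫ x in (-(1/2):ℝ)..(1/2), g x =
      (∫ x in (-(1/2):ℝ)..(1/2), min (1/2) (u x))
        - ∫ x in (-(1/2):ℝ)..(1/2), max (-(1/2)) (l x) := by
    rw [hg, intervalIntegral.integral_sub (intmin _ _) (intmax _ _)]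
  have hJ1 : ∫ x in (-(1/2):ℝ)..(1/2), min (1/2) (u x)
      = (c - (-(1/2))) * (1/2)
        + (t/(2*a2) * ((1/2) - c) + (-(a1/a2)) * (((1/2:ℝ)^2 - c^2)/2)) := by
    rw [← intervalIntegral.integral_add_adjacent_intervals (intmin (-(1/2)) c) (intmin c (1/2))]
    have e1 : ∫ x in (-(1/2):ℝ)..c, min (1/2) (u x) = ∫ x in (-(1/2):ℝ)..c, (1/2:ℝ) := by
      apply intervalIntegral.integral_congr
      intro x hx
      rw [Set.uIcc_of_le hc1] at hx
      refine min_eq_left ?_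
      rw [hu]; simp only; rw [le_div_iff₀ h2]
      nlinarith [mul_le_mul_of_nonneg_left hx.2 h1.le, hac]
    have e2 : ∫ x in c..(1/2:ℝ), min (1/2) (u x)
        = ∫ x in c..(1/2:ℝ), (t/(2*a2) + (-(a1/a2)) * x) := by
      apply intervalIntegral.integral_congr
      intro x hx
      rw [Set.uIcc_of_le hc2] at hx
      have hle : u x ≤ 1/2 := by
        rw [hu]; simp only; rw [div_le_iff₀ h2]
        nlinarith [mul_le_mul_of_nonneg_left hx.1 h1.le, hac]
      show (1:ℝ)/2 ⊓ u x = t/(2*a2) + -(a1/a2) * x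
      rw [min_eq_right hle, hu]
      field_simp
      ring
    rw [e1, e2, intervalIntegral.integral_const, integral_affine, smul_eq_mul]
  have hJ2 : ∫ x in (-(1/2):ℝ)..(1/2), max (-(1/2)) (l x)
      = ((-(t/(2*a2))) * (d - (-(1/2))) + (-(a1/a2)) * ((d^2 - (-(1/2:ℝ))^2)/2))
        + ((1/2) - d) * (-(1/2)) := by
    rw [← intervalIntegral.integral_add_adjacent_intervals (intmax (-(1/2)) d) (intmax d (1/2))]
    have e1 : ∫ x in (-(1/2):ℝ)..d, max (-(1/2)) (l x)
        = ∫ x in (-(1/2):ℝ)..d, ((-(t/(2*a2))) + (-(a1/a2)) * x) := by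
      apply intervalIntegral.integral_congr
      intro x hx
      rw [Set.uIcc_of_le hd1] at hx
      have hle : -(1/2:ℝ) ≤ l x := by
        rw [hl]; simp only; rw [le_div_iff₀ h2]
        nlinarith [mul_le_mul_of_nonneg_left hx.2 h1.le, had]
      show -(1/2:ℝ) ⊔ l x = -(t/(2*a2)) + -(a1/a2) * x
      rw [max_eq_right hle, hl]
      field_simp
      ring
    have e2 : ∫ x in d..(1/2:ℝ), max (-(1/2)) (l x) = ∫ x in d..(1/2:ℝ), (-(1/2):ℝ) := by
      apply intervalIntegral.integral_congr
      intro x hx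
      rw [Set.uIcc_of_le hd2] at hx
      refine max_eq_left ?_
      rw [hl]; simp only; rw [div_le_iff₀ h2]
      nlinarith [mul_le_mul_of_nonneg_left hx.1 h1.le, had]
    rw [e1, e2, intervalIntegral.integral_const, integral_affine, smul_eq_mul]
  rw [hsplit, hJ1, hJ2, hcdef, hddef]
  have h1' : a1 ≠ 0 := h1.ne'
  have h2' : a2 ≠ 0 := h2.ne'
  field_simp
  ring
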